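/- Every nonempty word on a well-ordered alphabet can be written uniquely as a lexicographically nondecreasing product u = u₁u₂⋯u_r of Lyndon words. -/

import Mathlib

/-- The lexicographic order of the paper: `u <_lex v` iff `v` is a proper prefix of `u`,
or `u = r ++ x :: s`, `v = r ++ y :: t` with letters `x < y`. -/
def PLt {X : Type*} [LinearOrder X] (u v : List X) : Prop :=
  (v <+: u ∧ v ≠ u) ∨
    ∃ (r s t : List X) (x y : X), x < y ∧ u = r ++ x :: s ∧ v = r ++ y :: t

def PLe {X : Type*} [LinearOrder X] (u v : List X) : Prop := PLt u v ∨ u = v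

/-- A nonempty word is Lyndon iff `u >_lex w ++ v` for every factorization `u = v ++ w`
with `v, w` nonempty. -/
def IsLyndon {X : Type*} [LinearOrder X] (u : List X) : Prop :=
  u ≠ [] ∧ ∀ v w : List X, u = v ++ w → v ≠ [] → w ≠ [] → PLt (w ++ v) u

namespace CFL
variable {X : Type*} [LinearOrder X]

theorem plt_nil_left (v : List X) : ¬ PLt [] v := by
  rintro (⟨h, hne⟩ | ⟨r, s, t, x, y, hxy, hu, hv⟩)
  · exact hne (List.prefix_nil.mp h)
  · simp at hu

theorem plt_nil_right {u : List X} : PLt u [] ↔ u ≠ [] := by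
  constructor
  · rintro (⟨h, hne⟩ | ⟨r, s, t, x, y, hxy, hu, hv⟩)
    · exact fun h' => hne h'.symm
    · simp at hv
  · intro h; exact Or.inl ⟨List.nil_prefix, fun h' => h h'.symm⟩

theorem plt_cons_iff {x y : X} {s t : List X} :
    PLt (x :: s) (y :: t) ↔ x < y ∨ (x = y ∧ PLt s t) := by
  constructor
  · rintro (⟨h, hne⟩ | ⟨r, s', t', a, b, hab, hu, hv⟩)
    · obtain ⟨rfl, h2⟩ := List.cons_prefix_cons.mp h
      exact Or.inr ⟨rfl, Or.inl ⟨h2, fun he => hne (by rw [he])⟩⟩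
    · cases r with
      | nil =>
        simp only [List.nil_append, List.cons.injEq] at hu hv
        exact Or.inl (hu.1 ▸ hv.1 ▸ hab)
      | cons z r' =>
        simp only [List.cons_append, List.cons.injEq] at hu hv
        exact Or.inr ⟨hu.1.trans hv.1.symm, Or.inr ⟨r', s', t', a, b, hab, hu.2, hv.2⟩⟩
  · rintro (h | ⟨rfl, ⟨h, hne⟩ | ⟨r, s', t', a, b, hab, rfl, rfl⟩⟩)
    · exact Or.inr ⟨[], s, t, x, y, h, rfl, rfl⟩
    · refine Or.inl ⟨List.cons_prefix_cons.mpr ⟨rfl, h⟩, fun he => hne ?_⟩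
      exact (List.cons.injEq x t x s ▸ he).2
    · exact Or.inr ⟨x :: r, s', t', a, b, hab, rfl, rfl⟩

theorem plt_irrefl (u : List X) : ¬ PLt u u := by
  induction u with
  | nil => exact plt_nil_left _
  | cons x s ih =>
    rw [plt_cons_iff]
    rintro (h | ⟨-, h⟩)
    · exact lt_irrefl _ h
    · exact ih h

theorem plt_trans : ∀ {u v w : List X}, PLt u v → PLt v w → PLt u w := by
  intro u
  induction u with
  | nil => intro v w h; exact absurd h (plt_nil_left v)
  | cons x u ih =>
    intro v w h1 h2
    cases v with
    | nil => exact absurd h2 (plt_nil_left w)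
    | cons y v =>
      cases w with
      | nil => exact plt_nil_right.mpr (List.cons_ne_nil _ _)
      | cons z w =>
        rw [plt_cons_iff] at h1 h2 ⊢
        rcases h1 with h1 | ⟨rfl, h1⟩ <;> rcases h2 with h2 | ⟨rfl, h2⟩
        · exact Or.inl (h1.trans h2)
        · exact Or.inl h1
        · exact Or.inl h2
        · exact Or.inr ⟨rfl, ih h1 h2⟩

theorem plt_asymm {u v : List X} (h : PLt u v) : ¬ PLt v u :=
  fun h' => plt_irrefl u (plt_trans h h')

theorem plt_trichotomy (u v : List X) : PLt u v ∨ u = v ∨ PLt v u := by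
  induction u generalizing v with
  | nil =>
    cases v with
    | nil => exact Or.inr (Or.inl rfl)
    | cons y t => exact Or.inr (Or.inr (plt_nil_right.mpr (List.cons_ne_nil _ _)))
  | cons x s ih =>
    cases v with
    | nil => exact Or.inl (plt_nil_right.mpr (List.cons_ne_nil _ _))
    | cons y t =>
      rcases lt_trichotomy x y with h | rfl | h
      · exact Or.inl (plt_cons_iff.mpr (Or.inl h))
      · rcases ih t with h | rfl | h
        · exact Or.inl (plt_cons_iff.mpr (Or.inr ⟨rfl, h⟩))
        · exact Or.inr (Or.inl rfl)
        · exact Or.inr (Or.inr (plt_cons_iff.mpr (Or.inr ⟨rfl, h⟩)))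
      · exact Or.inr (Or.inr (plt_cons_iff.mpr (Or.inl h)))

theorem plt_of_not_ple {u v : List X} (h : ¬ PLe u v) : PLt v u := by
  rcases plt_trichotomy u v with h' | h' | h'
  · exact absurd (Or.inl h') h
  · exact absurd (Or.inr h') h
  · exact h'

theorem plt_of_plt_of_ple {u v w : List X} (h1 : PLt u v) (h2 : PLe v w) : PLt u w := by
  rcases h2 with h2 | rfl
  · exact plt_trans h1 h2
  · exact h1

def Diff (u v : List X) : Prop :=
  ∃ (r s t : List X) (x y : X), x < y ∧ u = r ++ x :: s ∧ v = r ++ y :: t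

theorem Diff.plt {u v : List X} (h : Diff u v) : PLt u v := Or.inr h

theorem Diff.append {u v : List X} (s' t' : List X) (h : Diff u v) :
    Diff (u ++ s') (v ++ t') := by
  obtain ⟨r, s, t, x, y, hxy, rfl, rfl⟩ := h
  exact ⟨r, s ++ s', t ++ t', x, y, hxy, by simp, by simp⟩

theorem plt_diff {u v : List X} (h : PLt u v) (hlen : u.length ≤ v.length) : Diff u v := by
  rcases h with ⟨hpre, hne⟩ | hd
  · exact absurd (hpre.eq_of_length (le_antisymm hpre.length_le hlen)) hne
  · exact hd

theorem plt_append_left {u v : List X} (c : List X) :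
    PLt (c ++ u) (c ++ v) ↔ PLt u v := by
  induction c with
  | nil => simp
  | cons x c ih => simp [plt_cons_iff, ih, lt_irrefl]

theorem plt_of_prefix {u v : List X} (h : v <+: u) (hne : v ≠ u) : PLt u v := Or.inl ⟨h, hne⟩

theorem plt_append_right {a b : List X} (h : b ≠ []) : PLt (a ++ b) a := by
  refine plt_of_prefix ⟨b, rfl⟩ fun he => h ?_
  have := congrArg List.length he
  simp at this
  exact this

/-- Key: a Lyndon word is `≻` (PLt-greater than) all of its proper nonempty suffixes. -/
theorem suffix_plt {a v w : List X} (h : IsLyndon a) (hv : v ≠ []) (hw : w ≠ [])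
    (he : a = v ++ w) : PLt w a := by
  rcases plt_trichotomy w a with H | H | H
  · exact H
  · exfalso
    rw [← H] at he
    have := congrArg List.length he
    simp at this
    exact hv this
  · exfalso
    rcases H with ⟨hpre, hne⟩ | hd
    · -- w is a border of a
      obtain ⟨m, hm⟩ := hpre
      have hmne : m ≠ [] := by rintro rfl; rw [List.append_nil] at hm; exact hne hm
      have h1 : PLt v m := by
        have := h.2 v w he hv hw
        rw [← hm] at this
        exact (plt_append_left w).mp this
      have hlen : v.length = m.length := by
        have := congrArg List.length (he.symm.trans hm.symm)
        simp at this; omega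
      have h2 : PLt (v ++ w) (m ++ w) := ((plt_diff h1 hlen.le).append w w).plt
      have h3 : PLt (m ++ w) (v ++ w) := by
        have := h.2 w m hm.symm hw hmne
        rwa [he] at this
      exact plt_asymm h2 h3
    · -- a and w differ at a letter
      obtain ⟨r, s, t, x, y, hxy, ha, hw'⟩ := hd
      have : PLt a (w ++ v) := Or.inr ⟨r, s, t ++ v, x, y, hxy, ha, by simp [hw']⟩
      exact plt_asymm this (h.2 v w he hv hw)

theorem lyndon_of_suffix {a : List X} (hne : a ≠ [])
    (h : ∀ v w, a = v ++ w → v ≠ [] → w ≠ [] → PLt w a) : IsLyndon a := by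
  refine ⟨hne, fun v w he hv hw => ?_⟩
  have h1 := h v w he hv hw
  have hd : Diff w a := plt_diff h1 (by rw [he]; simp)
  obtain ⟨r, s, t, x, y, hxy, hw', ha⟩ := hd
  exact Or.inr ⟨r, s ++ v, t, x, y, hxy, by simp [hw'], ha⟩

theorem lyndon_append {a b : List X} (ha : IsLyndon a) (hb : IsLyndon b)
    (hba : PLt b a) : IsLyndon (a ++ b) := by
  have key : PLt b (a ++ b) := by
    rcases hba with ⟨hpre, hne⟩ | hd
    · -- a is a proper prefix of b
      obtain ⟨c, hc⟩ := hpre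
      have hcne : c ≠ [] := by rintro rfl; rw [List.append_nil] at hc; exact hne hc
      have h1 : PLt c b := suffix_plt hb ha.1 hcne hc.symm
      rw [← hc] at h1 ⊢
      exact (plt_append_left a).mpr h1
    · obtain ⟨r, s, t, x, y, hxy, hb', ha'⟩ := hd
      exact Or.inr ⟨r, s, t ++ b, x, y, hxy, hb', by simp [ha']⟩
  refine lyndon_of_suffix (by simp [ha.1]) fun v w he hv hw => ?_
  rcases List.append_eq_append_iff.mp he.symm with ⟨k, hk1, hk2⟩ | ⟨k, hk1, hk2⟩
  · -- a = v ++ k, w = k ++ b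
    by_cases hk : k = []
    · subst hk; simp at hk2; subst hk2; exact key
    · have h1 : PLt k a := suffix_plt ha hv hk hk1
      have hd : Diff k a := plt_diff h1 (by rw [hk1]; simp)
      rw [hk2]
      exact ((hd.append b b).plt)
  · -- v = a ++ k, b = k ++ w
    by_cases hk : k = []
    · subst hk; simp at hk2; subst hk2; exact key
    · have h1 : PLt w b := suffix_plt hb hk hw hk2
      exact plt_trans h1 key

theorem singleton_lyndon (x : X) : IsLyndon [x] := by
  refine ⟨List.cons_ne_nil _ _, fun v w he hv hw => ?_⟩
  exfalso
  cases v with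
  | nil => exact hv rfl
  | cons z v' =>
    simp only [List.cons_append, List.cons.injEq] at he
    exact hw (List.append_eq_nil_iff.mp he.2.symm).2

theorem exists_bad {L : List (List X)} (h : ¬ L.Chain' PLe) :
    ∃ p a b q, L = p ++ a :: b :: q ∧ ¬ PLe a b := by
  induction L with
  | nil => exact absurd List.isChain_nil h
  | cons a L ih =>
    cases L with
    | nil => exact absurd (List.isChain_singleton a) h
    | cons b q =>
      simp only [List.Chain', List.isChain_cons_cons] at h
      by_cases hab : PLe a b
      · obtain ⟨p, a', b', q', heq, hbad⟩ := ih (fun hc => h ⟨hab, hc⟩)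
        exact ⟨a :: p, a', b', q', by rw [heq]; rfl, hbad⟩
      · exact ⟨[], a, b, q, rfl, hab⟩

theorem exists_fact : ∀ (n : ℕ) (L : List (List X)), L.length ≤ n →
    (∀ w ∈ L, IsLyndon w) →
    ∃ M : List (List X), (∀ w ∈ M, IsLyndon w) ∧ M.Chain' PLe ∧ M.flatten = L.flatten := by
  intro n
  induction n with
  | zero =>
    intro L hlen _
    rw [Nat.le_zero, List.length_eq_zero_iff] at hlen
    subst hlen
    exact ⟨[], by intro w hw; simp at hw, List.isChain_nil, rfl⟩
  | succ n ih =>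
    intro L hlen hall
    by_cases hc : L.Chain' PLe
    · exact ⟨L, hall, hc, rfl⟩
    · obtain ⟨p, a, b, q, heq, hbad⟩ := exists_bad hc
      subst heq
      have hba : PLt b a := plt_of_not_ple hbad
      have hab : IsLyndon (a ++ b) :=
        lyndon_append (hall a (by simp)) (hall b (by simp)) hba
      obtain ⟨M, h1, h2, h3⟩ := ih (p ++ (a ++ b) :: q)
        (by simp at hlen ⊢; omega)
        (by
          intro w hw
          simp only [List.mem_append, List.mem_cons] at hw
          rcases hw with hw | hw | hw
          · exact hall w (by simp [hw])
          · exact hw ▸ hab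
          · exact hall w (by simp [hw]))
      exact ⟨M, h1, h2, by rw [h3]; simp⟩

/-- Key spanning lemma for uniqueness: a nonempty proper suffix `p` of a Lyndon word `a`
cannot be a prefix of the flatten of a nondecreasing Lyndon factorization whose factors
are all `≻` bounded below, i.e. with `PLt a m` for the head `m`. -/
theorem span : ∀ (ms : List (List X)) (a p : List X),
    (∀ w ∈ ms, IsLyndon w) → ms.Chain' PLe → IsLyndon a →
    (∀ m, ms.head? = some m → PLt a m) →
    p ≠ [] → (∃ v, v ≠ [] ∧ a = v ++ p) → p <+: ms.flatten → False := by
  intro ms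
  induction ms with
  | nil =>
    intro a p _ _ _ _ hp _ hpre
    rw [List.flatten_nil, List.prefix_nil] at hpre
    exact hp hpre
  | cons m ms ih =>
    intro a p hall hchain ha hhead hp ⟨v, hv, hav⟩ hpre
    have ham : PLt a m := hhead m rfl
    have hpa : PLt p a := suffix_plt ha hv hp hav
    rw [List.flatten_cons] at hpre
    rcases List.prefix_or_prefix_of_prefix hpre (List.prefix_append m ms.flatten)
      with hpm | hmp
    · -- p <+: m, so PLe m p, contradiction with a ≺ m ⪯ p ≺ a
      have hmp' : PLe m p := by
        by_cases hpmeq : p = m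
        · exact Or.inr hpmeq.symm
        · exact Or.inl (plt_of_prefix hpm hpmeq)
      exact plt_irrefl a (plt_trans (plt_of_plt_of_ple ham hmp') hpa)
    · -- m <+: p
      obtain ⟨p', rfl⟩ := hmp
      by_cases hp' : p' = []
      · subst hp'
        simp only [List.append_nil] at hpa
        exact plt_irrefl a (plt_trans ham hpa)
      · have hpre' : p' <+: ms.flatten := by
          obtain ⟨z, hz⟩ := hpre
          rw [List.append_assoc] at hz
          exact ⟨z, List.append_cancel_left hz⟩
        have hchain' : ms.Chain' PLe := hchain.tail
        have hhead' : ∀ m', ms.head? = some m' → PLt a m' := by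
          intro m' hm'
          have : PLe m m' := hchain.rel_head? hm'
          exact plt_of_plt_of_ple ham this
        exact ih a p' (fun w hw => hall w (List.mem_cons_of_mem _ hw)) hchain' ha hhead'
          hp' ⟨v ++ m, by simp [hv], by rw [hav, List.append_assoc]⟩ hpre'

theorem heads_eq {a b : List X} {L' M' : List (List X)}
    (ha : IsLyndon a) (hb : IsLyndon b)
    (hM : ∀ w ∈ M', IsLyndon w) (hchainM : (b :: M').Chain' PLe)
    (hflat : a ++ L'.flatten = b ++ M'.flatten) (hpre : b <+: a) : a = b := by
  by_contra hne
  obtain ⟨a', haa⟩ := hpre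
  have ha' : a' ≠ [] := by rintro rfl; rw [List.append_nil] at haa; exact hne haa.symm
  have hpre' : a' <+: M'.flatten := by
    rw [← haa, List.append_assoc] at hflat
    exact ⟨L'.flatten, List.append_cancel_left hflat⟩
  have hab : PLt a b := plt_of_prefix ⟨a', haa⟩ (fun h => hne h.symm)
  refine span M' a a' hM hchainM.tail ha ?_ ha' ⟨b, ?_, haa.symm⟩ hpre'
  · intro m hm
    exact plt_of_plt_of_ple hab (hchainM.rel_head? hm)
  · exact hb.1

theorem flatten_nil_eq {L : List (List X)} (hall : ∀ w ∈ L, IsLyndon w)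
    (h : L.flatten = []) : L = [] := by
  cases L with
  | nil => rfl
  | cons w L =>
    rw [List.flatten_cons] at h
    exact absurd (List.append_eq_nil_iff.mp h).1 (hall w (by simp)).1

theorem uniq : ∀ (L M : List (List X)), (∀ w ∈ L, IsLyndon w) → L.Chain' PLe →
    (∀ w ∈ M, IsLyndon w) → M.Chain' PLe → L.flatten = M.flatten → L = M := by
  intro L
  induction L with
  | nil =>
    intro M _ _ hM _ hflat
    exact (flatten_nil_eq hM hflat.symm).symm
  | cons a L ih =>
    intro M hL hchainL hM hchainM hflat
    cases M with
    | nil =>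
      exact absurd (flatten_nil_eq hL hflat) (by simp)
    | cons b M =>
      rw [List.flatten_cons, List.flatten_cons] at hflat
      have hab : a = b := by
        rcases List.prefix_or_prefix_of_prefix (List.prefix_append a L.flatten)
          (hflat ▸ List.prefix_append b M.flatten) with h | h
        · exact (heads_eq (hM b (by simp)) (hL a (by simp)) (fun w hw => hL w (by simp [hw]))
            hchainL hflat.symm h).symm
        · exact heads_eq (hL a (by simp)) (hM b (by simp)) (fun w hw => hM w (by simp [hw]))
            hchainM hflat h
      subst hab
      have htail : L.flatten = M.flatten := List.append_cancel_left hflat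
      rw [ih M (fun w hw => hL w (by simp [hw])) hchainL.tail
        (fun w hw => hM w (by simp [hw])) hchainM.tail htail]

end CFL


/-- Every nonempty word can be written uniquely as a lexicographically nondecreasing
product of Lyndon words. -/
theorem lyndon_factorization_unique {X : Type*} [LinearOrder X] (u : List X) (hu : u ≠ []) :
    ∃! L : List (List X), (∀ w ∈ L, IsLyndon w) ∧ L.Chain' PLe ∧ L.flatten = u := by

  obtain ⟨M, h1, h2, h3⟩ := CFL.exists_fact (u.map fun x => [x]).length
    (u.map fun x => [x]) le_rfl
    (by
      intro w hw
      simp only [List.mem_map] at hw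
      obtain ⟨x, -, rfl⟩ := hw
      exact CFL.singleton_lyndon x)
  have hflat : ∀ l : List X, (l.map fun x => [x]).flatten = l := fun l => by
    induction l <;> simp_all
  rw [hflat u] at h3
  refine ⟨M, ⟨h1, h2, h3⟩, ?_⟩
  rintro N ⟨g1, g2, g3⟩
  exact CFL.uniq N M g1 g2 h1 h2 (g3.trans h3.symm)
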